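/- With K = ℚ(ζ + ζ^{-1}) for ζ a primitive 2^r-th root of unity (r ≥ 5), n = 2^{r-2}, O_K = ℤ[ζ + ζ^{-1}], e_0 = 1 and e_i = ζ^i + ζ^{-i}, the ℤ-submodule I of O_K spanned by {2e_0, e_1, e_2, …, e_{n-1}} equals the principal ideal (ζ + ζ^{-1})·O_K = e_1·O_K. In particular I is a principal ideal of O_K. -/

import Mathlib

open scoped IntermediateField

/-- With `K = ℚ(ζ + ζ⁻¹)` for `ζ` a primitive `2^r`-th root of unity
(`r ≥ 5`), `n = 2^{r-2}`, `O_K = ℤ[ζ + ζ⁻¹]`, the `ℤ`-submodule of `O_K` spanned by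
`{2e₀, e₁, …, e_{n-1}}` equals the principal ideal `(ζ + ζ⁻¹)·O_K = e₁·O_K`. -/
theorem span_eq_principal_ideal_e1
    (r n : ℕ) (hr : 5 ≤ r) (hn : n = 2 ^ (r - 2))
    (ζ : ℂ) (hζ : IsPrimitiveRoot ζ (2 ^ r))
    (ξ : ℚ⟮ζ + ζ⁻¹⟯) (hξ : (ξ : ℂ) = ζ + ζ⁻¹)
    (e : ℕ → ℚ⟮ζ + ζ⁻¹⟯) (he0 : e 0 = 1)
    (he : ∀ i : ℕ, 1 ≤ i → ((e i : ℂ) = ζ ^ i + ζ⁻¹ ^ i))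
    (I : Submodule ℤ ℚ⟮ζ + ζ⁻¹⟯)
    (hI : I = Submodule.span ℤ
      ({2 * e 0} ∪ (e '' {i : ℕ | 1 ≤ i ∧ i ≤ n - 1}))) :
    ∀ x : ℚ⟮ζ + ζ⁻¹⟯, x ∈ I ↔
      ∃ z ∈ Algebra.adjoin ℤ ({ξ} : Set ℚ⟮ζ + ζ⁻¹⟯), x = e 1 * z := by
  have hzne : ζ ≠ 0 := hζ.ne_zero (by positivity)
  have hn8 : 8 ≤ n := by
    rw [hn]
    calc (8:ℕ) = 2 ^ 3 := by norm_num
    _ ≤ 2 ^ (r - 2) := Nat.pow_le_pow_right (by norm_num) (by omega)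
  have hcoe2 : ((2 : ℚ⟮ζ + ζ⁻¹⟯) : ℂ) = 2 := by norm_cast
  -- e 1 = ξ
  have hξe1 : e 1 = ξ := by
    apply Subtype.coe_injective
    show ((e 1 : ℂ)) = (ξ : ℂ)
    rw [he 1 le_rfl, hξ]; ring
  -- recurrences
  have hrec2 : ∀ j : ℕ, ξ * e (j+2) = e (j+3) + e (j+1) := by
    intro j
    apply Subtype.coe_injective
    push_cast [hξ, he (j+2) (by omega), he (j+3) (by omega), he (j+1) (by omega)]
    simp only [inv_pow]
    field_simp
    ring
  have hrec1 : ξ * e 1 = e 2 + 2 * e 0 := by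
    apply Subtype.coe_injective
    push_cast [hξ, he 1 (by omega), he 2 (by omega), he0, hcoe2]
    field_simp
    ring
  -- e n = 0
  have hen : e n = 0 := by
    apply Subtype.coe_injective
    show ((e n : ℂ)) = ((0 : ℚ⟮ζ + ζ⁻¹⟯) : ℂ)
    have hw : ζ ^ n * ζ ^ n = -1 := by
      rw [← pow_add]
      have h2n : n + n = 2 ^ (r - 1) := by
        rw [hn, ← two_mul, ← pow_succ']
        congr 1; omega
      rw [h2n]
      have hsq : (ζ ^ (2 ^ (r-1))) * (ζ ^ (2 ^ (r-1))) = 1 := by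
        rw [← pow_add]
        have hrr : 2 ^ (r-1) + 2 ^ (r-1) = 2 ^ r := by
          rw [← two_mul, ← pow_succ']
          congr 1; omega
        rw [hrr, hζ.pow_eq_one]
      rcases mul_self_eq_one_iff.mp hsq with h | h
      · exfalso
        exact hζ.pow_ne_one_of_pos_of_lt (by positivity)
          (Nat.pow_lt_pow_right (by norm_num) (by omega)) h
      · exact h
    rw [he n (by omega)]
    have hzn : ζ ^ n ≠ 0 := pow_ne_zero _ hzne
    push_cast
    rw [inv_pow]
    have hinv : (ζ ^ n)⁻¹ = -ζ ^ n := by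
      field_simp
      linear_combination hw
    rw [hinv]; ring
  set R := Algebra.adjoin ℤ ({ξ} : Set ℚ⟮ζ + ζ⁻¹⟯) with hR
  have hξR : ξ ∈ R := Algebra.self_mem_adjoin_singleton ℤ ξ
  have h2R : (2 : ℚ⟮ζ + ζ⁻¹⟯) ∈ R := by exact_mod_cast Subalgebra.natCast_mem R 2
  -- all e i lie in R
  have heR : ∀ i : ℕ, e i ∈ R ∧ e (i+1) ∈ R := by
    intro i
    induction i with
    | zero =>
      constructor
      · rw [he0]; exact one_mem R
      · show e 1 ∈ R; rw [hξe1]; exact hξR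
    | succ j ih =>
      refine ⟨ih.2, ?_⟩
      match j with
      | 0 =>
        have h2 : e 2 = ξ * e 1 - 2 * e 0 := by linear_combination -hrec1
        rw [h2]
        exact R.sub_mem (R.mul_mem hξR ih.2) (R.mul_mem h2R ih.1)
      | Nat.succ k =>
        have h3 : e (k+3) = ξ * e (k+2) - e (k+1) := by linear_combination -hrec2 k
        exact h3 ▸ R.sub_mem (R.mul_mem hξR ih.2) ih.1
  -- the ideal J = ξ·R as a ℤ-submodule
  set J : Submodule ℤ ℚ⟮ζ + ζ⁻¹⟯ :=
    Submodule.map (LinearMap.mulLeft ℤ ξ) (Subalgebra.toSubmodule R) with hJ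
  have hJmem : ∀ y : ℚ⟮ζ + ζ⁻¹⟯, y ∈ J ↔ ∃ z ∈ R, y = ξ * z := by
    intro y
    simp only [hJ, Submodule.mem_map, Subalgebra.mem_toSubmodule,
      LinearMap.mulLeft_apply]
    constructor
    · rintro ⟨z, hz, rfl⟩; exact ⟨z, hz, rfl⟩
    · rintro ⟨z, hz, rfl⟩; exact ⟨z, hz, rfl⟩
  have hmulJ : ∀ z ∈ R, ξ * z ∈ J := fun z hz => (hJmem _).mpr ⟨z, hz, rfl⟩
  -- parity lemma
  have hS : ∀ m : ℕ, e (2*(m+1)) - ((-1:ℤ)^(m+1)) • (2 * e 0) ∈ J := by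
    intro m
    induction m with
    | zero =>
      have h1 : e (2*(0+1)) - ((-1:ℤ)^(0+1)) • (2 * e 0) = ξ * e 1 := by
        have h2 : 2*(0+1) = 2 := by norm_num
        rw [h2, pow_one, neg_smul, one_smul, sub_neg_eq_add]
        linear_combination -hrec1
      rw [h1]; exact hmulJ _ (heR 0).2
    | succ p ih =>
      have h2 := hrec2 (2*p+1)
      have key : e (2*(p+1+1)) - ((-1:ℤ)^(p+1+1)) • (2 * e 0)
          = ξ * e (2*p+1+2) - (e (2*(p+1)) - ((-1:ℤ)^(p+1)) • (2 * e 0)) := by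
        have e1 : 2*(p+1+1) = 2*p+1+3 := by ring
        have e2 : 2*(p+1) = 2*p+1+1 := by ring
        have e3 : ((-1:ℤ)^(p+1+1)) = -((-1:ℤ)^(p+1)) := by ring
        rw [e1, e2, h2, e3, neg_smul, sub_neg_eq_add]
        abel
      rw [key]
      exact J.sub_mem (hmulJ _ (heR (2*p+2)).2) ih
  -- 2·e₀ ∈ J
  have h2e0 : (2 : ℚ⟮ζ + ζ⁻¹⟯) * e 0 ∈ J := by
    set m : ℕ := 2 ^ (r - 3) with hm
    have hmn : n = 2 * m := by
      rw [hn, hm, ← pow_succ']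
      congr 1; omega
    have hm1 : 1 ≤ m := Nat.one_le_two_pow
    have hEm : Even m := by
      refine ⟨2 ^ (r - 4), ?_⟩
      rw [hm, ← two_mul, ← pow_succ']
      congr 1; omega
    have hSm := hS (m - 1)
    have hm' : m - 1 + 1 = m := by omega
    rw [hm', ← hmn, hen, hEm.neg_one_pow, one_smul, zero_sub] at hSm
    simpa using J.neg_mem hSm
  -- all e (i+1) ∈ J
  have heJ : ∀ i : ℕ, e (i+1) ∈ J ∧ e (i+2) ∈ J := by
    intro i
    induction i with
    | zero =>
      constructor
      · show e 1 ∈ J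
        have h1 : e 1 = ξ * 1 := by rw [hξe1, mul_one]
        rw [h1]; exact hmulJ _ (one_mem R)
      · show e 2 ∈ J
        have h2 : e 2 = ξ * e 1 - 2 * e 0 := by linear_combination -hrec1
        rw [h2]; exact J.sub_mem (hmulJ _ (heR 0).2) h2e0
    | succ j ih =>
      refine ⟨ih.2, ?_⟩
      have h3 : e (j+3) = ξ * e (j+2) - e (j+1) := by linear_combination -hrec2 j
      rw [h3]; exact J.sub_mem (hmulJ _ (heR (j+1)).2) ih.1
  -- I ≤ J
  have hIJ : I ≤ J := by
    rw [hI]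
    refine Submodule.span_le.mpr ?_
    rintro y (rfl | ⟨i, ⟨hi1, _⟩, rfl⟩)
    · exact h2e0
    · obtain ⟨j, rfl⟩ := Nat.exists_eq_add_of_le hi1
      have hj := (heJ j).1
      rwa [Nat.add_comm j 1] at hj
  -- generators are in I
  have he1I : ∀ i : ℕ, 1 ≤ i → i ≤ n - 1 → e i ∈ I := by
    intro i h1 h2
    rw [hI]
    exact Submodule.subset_span (Or.inr ⟨i, ⟨h1, h2⟩, rfl⟩)
  have h2e0I : (2 : ℚ⟮ζ + ζ⁻¹⟯) * e 0 ∈ I := by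
    rw [hI]; exact Submodule.subset_span (Or.inl rfl)
  -- I is stable under multiplication by ξ
  have hmulI : ∀ y ∈ I, ξ * y ∈ I := by
    intro y hy
    rw [hI] at hy
    rw [hI]
    induction hy using Submodule.span_induction with
    | mem g hg =>
      rcases hg with rfl | ⟨i, ⟨hi1, hi2⟩, rfl⟩
      · have h1 : ξ * (2 * e 0) = e 1 + e 1 := by rw [he0, hξe1]; ring
        rw [h1, ← hI]
        exact I.add_mem (he1I 1 le_rfl (by omega)) (he1I 1 le_rfl (by omega))
      · rcases i with _ | i
        · exact absurd hi1 (by omega)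
        rcases i with _ | j
        · rw [hrec1, ← hI]
          exact I.add_mem (he1I 2 (by omega) (by omega)) h2e0I
        · rw [hrec2 j, ← hI]
          by_cases hc : j + 3 ≤ n - 1
          · exact I.add_mem (he1I (j+3) (by omega) hc) (he1I (j+1) (by omega) (by omega))
          · have h3 : j + 3 = n := by omega
            rw [h3, hen, zero_add]
            exact he1I (j+1) (by omega) (by omega)
    | zero => rw [mul_zero]; exact Submodule.zero_mem _
    | add a b _ _ ha hb => rw [mul_add]; exact Submodule.add_mem _ ha hb
    | smul c a _ ha => rw [mul_smul_comm]; exact Submodule.smul_mem _ _ ha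
  have hpows : ∀ k : ℕ, ξ ^ (k+1) ∈ I := by
    intro k
    induction k with
    | zero => simpa [← hξe1] using he1I 1 le_rfl (by omega)
    | succ p ih =>
      have h1 : ξ ^ (p+2) = ξ * ξ ^ (p+1) := by ring
      rw [h1]; exact hmulI _ ih
  -- J ≤ I
  have hJI : ∀ z ∈ R, ξ * z ∈ I := by
    intro z hz
    have hz' : z ∈ Submodule.span ℤ ((Submonoid.closure ({ξ} : Set ℚ⟮ζ + ζ⁻¹⟯) : Set ℚ⟮ζ + ζ⁻¹⟯)) := by
      rw [← Algebra.adjoin_eq_span]; exact hz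
    clear hz
    induction hz' using Submodule.span_induction with
    | mem w hw =>
      obtain ⟨k, rfl⟩ := Submonoid.mem_closure_singleton.mp hw
      have h1 : ξ * ξ ^ k = ξ ^ (k+1) := by ring
      rw [h1]; exact hpows k
    | zero => rw [mul_zero]; exact Submodule.zero_mem _
    | add a b _ _ ha hb => rw [mul_add]; exact Submodule.add_mem _ ha hb
    | smul c a _ ha => rw [mul_smul_comm]; exact Submodule.smul_mem _ _ ha
  -- conclusion
  intro x
  constructor
  · intro hx
    obtain ⟨z, hz, hx'⟩ := (hJmem x).mp (hIJ hx)
    exact ⟨z, hz, by rw [hξe1]; exact hx'⟩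
  · rintro ⟨z, hz, rfl⟩
    rw [hξe1]
    exact hJI z hz
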